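/- The energy of the mKdV breather is E[B_{α,β}] = (1/2)∫_ℝ (∂_x B)² − (1/4)∫_ℝ B⁴ = (4/3)βγ, where γ = 3α² − β², for all α, β > 0 and all t ∈ ℝ. -/

import Mathlib

open MeasureTheory

noncomputable def breather (α β x₁ x₂ : ℝ) (t x : ℝ) : ℝ :=
  2 * Real.sqrt 2 *
    deriv (fun y : ℝ =>
      Real.arctan ((β / α) * Real.sin (α * (y + (α ^ 2 - 3 * β ^ 2) * t + x₁)) /
        Real.cosh (β * (y + (3 * α ^ 2 - β ^ 2) * t + x₂)))) x

namespace BreatherEnergyProof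

open Real Set Filter intervalIntegral
open scoped Topology

noncomputable section

/-! ### Value-level polynomial definitions -/

def DDv (a b s ch : ℝ) : ℝ := a^2 * ch^2 + b^2 * s^2

def EEv (a b s c sh ch : ℝ) : ℝ := a*c*ch - b*s*sh

def DPv (a b s c sh ch : ℝ) : ℝ := 2*a*b*(a*sh*ch + b*s*c)

def GGv (a b s c sh ch : ℝ) : ℝ :=
  -(a^2+b^2)*s*ch*DDv a b s ch - EEv a b s c sh ch * DPv a b s c sh ch

def NNv (a b s c sh ch : ℝ) : ℝ := (-8)*a*b^8*s^5*c + (8)*a^2*b^7*s^4*sh*ch + (64/3)*a^3*b^6*s^3*c + (-48)*a^3*b^6*s^3*c*ch^2 + (8/3)*a^3*b^6*s^5*c + (64)*a^4*b^5*s^2*sh*ch + (-16)*a^4*b^5*s^2*sh*ch^3 + (-24)*a^4*b^5*s^4*sh*ch + (-64)*a^5*b^4*s*c*ch^2 + (24)*a^5*b^4*s*c*ch^4 + (16)*a^5*b^4*s^3*c*ch^2 + (-64/3)*a^6*b^3*sh*ch^3 + (-8/3)*a^6*b^3*sh*ch^5 + (48)*a^6*b^3*s^2*sh*ch^3 + (-8)*a^7*b^2*s*c*ch^4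 + (8)*a^8*b*sh*ch^5

def NPv (a b s c sh ch : ℝ) : ℝ := (8)*a^2*b^8*s^4*ch^2 + (8)*a^2*b^8*s^4*sh^2 + (-40)*a^2*b^8*s^4*c^2 + (8)*a^2*b^8*s^6 + (-64)*a^3*b^7*s^3*c*sh*ch + (64)*a^4*b^6*s^2*ch^2 + (-16)*a^4*b^6*s^2*ch^4 + (64)*a^4*b^6*s^2*sh^2 + (-48)*a^4*b^6*s^2*sh^2*ch^2 + (64)*a^4*b^6*s^2*c^2 + (-144)*a^4*b^6*s^2*c^2*ch^2 + (-64/3)*a^4*b^6*s^4 + (24)*a^4*b^6*s^4*ch^2 + (-24)*a^4*b^6*s^4*sh^2 + (40/3)*a^4*b^6*s^4*c^2 + (-8/3)*a^4*b^6*s^6 + (64)*a^5*b^5*s*c*sh*ch^3 + (-64)*a^5*b^5*s^3*c*sh*ch + (-64/3)*a^6*b^4*ch^4 + (-8/3)*a^6*b^4*ch^6 + (-64)*a^6*b^4*sh^2*ch^2 + (-40/3)*a^6*b^4*sh^2*ch^4 + (-64)*a^6*b^4*c^2*ch^2 + (24)*a^6*b^4*c^2*ch^4 + (64)*a^6*b^4*s^2*ch^2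 + (24)*a^6*b^4*s^2*ch^4 + (144)*a^6*b^4*s^2*sh^2*ch^2 + (48)*a^6*b^4*s^2*c^2*ch^2 + (-16)*a^6*b^4*s^4*ch^2 + (64)*a^7*b^3*s*c*sh*ch^3 + (8)*a^8*b^2*ch^6 + (40)*a^8*b^2*sh^2*ch^4 + (-8)*a^8*b^2*c^2*ch^4 + (8)*a^8*b^2*s^2*ch^4

def RRv (a b s c v u : ℝ) : ℝ := (-8)*a*b^8*s^5*c*u^4 + (8)*a^2*b^7*s^4*v*u^2 + (-48)*a^3*b^6*s^3*c*u^2 + (64/3)*a^3*b^6*s^3*c*u^4 + (8/3)*a^3*b^6*s^5*c*u^4 + (-16)*a^4*b^5*s^2*v + (64)*a^4*b^5*s^2*v*u^2 + (-24)*a^4*b^5*s^4*v*u^2 + (24)*a^5*b^4*s*c + (-64)*a^5*b^4*s*c*u^2 + (16)*a^5*b^4*s^3*c*u^2 + (-64/3)*a^6*b^3*v + (48)*a^6*b^3*s^2*v + (-8)*a^7*b^2*s*c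

/-! ### Pointwise definitions -/

def SN (α β c₁ c₂ x : ℝ) : ℝ := Real.sin (α * (x + c₁))
def CN (α β c₁ c₂ x : ℝ) : ℝ := Real.cos (α * (x + c₁))
def SH (α β c₁ c₂ x : ℝ) : ℝ := Real.sinh (β * (x + c₂))
def CH (α β c₁ c₂ x : ℝ) : ℝ := Real.cosh (β * (x + c₂))

def DD (α β c₁ c₂ x : ℝ) : ℝ := DDv α β (SN α β c₁ c₂ x) (CH α β c₁ c₂ x)
def EE (α β c₁ c₂ x : ℝ) : ℝ :=
  EEv α β (SN α β c₁ c₂ x) (CN α β c₁ c₂ x) (SH α β c₁ c₂ x) (CH α β c₁ c₂ x)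
def DP (α β c₁ c₂ x : ℝ) : ℝ :=
  DPv α β (SN α β c₁ c₂ x) (CN α β c₁ c₂ x) (SH α β c₁ c₂ x) (CH α β c₁ c₂ x)
def GG (α β c₁ c₂ x : ℝ) : ℝ :=
  GGv α β (SN α β c₁ c₂ x) (CN α β c₁ c₂ x) (SH α β c₁ c₂ x) (CH α β c₁ c₂ x)
def NN (α β c₁ c₂ x : ℝ) : ℝ :=
  NNv α β (SN α β c₁ c₂ x) (CN α β c₁ c₂ x) (SH α β c₁ c₂ x) (CH α β c₁ c₂ x)
def NP (α β c₁ c₂ x : ℝ) : ℝ :=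
  NPv α β (SN α β c₁ c₂ x) (CN α β c₁ c₂ x) (SH α β c₁ c₂ x) (CH α β c₁ c₂ x)

def BF (α β c₁ c₂ x : ℝ) : ℝ := 2*Real.sqrt 2*α*β*EE α β c₁ c₂ x / DD α β c₁ c₂ x
def BX (α β c₁ c₂ x : ℝ) : ℝ := 2*Real.sqrt 2*α*β*GG α β c₁ c₂ x / DD α β c₁ c₂ x ^ 2
def HH (α β c₁ c₂ x : ℝ) : ℝ := NN α β c₁ c₂ x / DD α β c₁ c₂ x ^ 3

def UU (α β c₁ c₂ x : ℝ) : ℝ := (CH α β c₁ c₂ x)⁻¹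
def VV (α β c₁ c₂ x : ℝ) : ℝ := SH α β c₁ c₂ x / CH α β c₁ c₂ x

/-! ### Basic positivity and bounds -/

variable {α β c₁ c₂ : ℝ}

lemma CH_pos (x : ℝ) : 0 < CH α β c₁ c₂ x := by simp only [CH]; exact Real.cosh_pos _

lemma one_le_CH (x : ℝ) : 1 ≤ CH α β c₁ c₂ x := by simp only [CH]; exact Real.one_le_cosh _

lemma CH_ne (x : ℝ) : CH α β c₁ c₂ x ≠ 0 := (CH_pos x).ne'

lemma DD_pos (hα : 0 < α) (x : ℝ) : 0 < DD α β c₁ c₂ x := by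
  have h1 : 0 < α^2 * CH α β c₁ c₂ x ^2 := mul_pos (pow_pos hα 2) (pow_pos (CH_pos x) 2)
  have h2 : 0 ≤ β^2 * SN α β c₁ c₂ x ^2 := by positivity
  simp only [DD, DDv]; linarith

lemma DD_ne (hα : 0 < α) (x : ℝ) : DD α β c₁ c₂ x ≠ 0 := (DD_pos hα x).ne'

lemma abs_SN_le (x : ℝ) : |SN α β c₁ c₂ x| ≤ 1 := abs_sin_le_one _
lemma abs_CN_le (x : ℝ) : |CN α β c₁ c₂ x| ≤ 1 := abs_cos_le_one _

lemma abs_SH_le (x : ℝ) : |SH α β c₁ c₂ x| ≤ CH α β c₁ c₂ x := by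
  simp only [SH, CH]
  rw [abs_sinh]
  calc Real.sinh |β * (x + c₂)| ≤ Real.cosh |β * (x + c₂)| := (Real.sinh_lt_cosh _).le
  _ = Real.cosh (β * (x + c₂)) := Real.cosh_abs _

lemma abs_VV_le (x : ℝ) : |VV α β c₁ c₂ x| ≤ 1 := by
  simp only [VV]
  rw [abs_div, div_le_one (abs_pos.mpr (CH_ne x))]
  rw [abs_of_pos (CH_pos x)]
  exact abs_SH_le x

lemma UU_pos (x : ℝ) : 0 < UU α β c₁ c₂ x := inv_pos.mpr (CH_pos x)

lemma UU_le_one (x : ℝ) : UU α β c₁ c₂ x ≤ 1 := inv_le_one_of_one_le₀ (one_le_CH x)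

lemma abs_UU_le (x : ℝ) : |UU α β c₁ c₂ x| ≤ 1 := by
  rw [abs_of_pos (UU_pos x)]; exact UU_le_one x

/-! ### Derivatives of the basic functions -/

lemma hasDerivAt_SN (x : ℝ) :
    HasDerivAt (fun y => SN α β c₁ c₂ y) (α * CN α β c₁ c₂ x) x := by
  have h : HasDerivAt (fun y : ℝ => α * (y + c₁)) α x := by
    simpa using ((hasDerivAt_id x).add_const c₁).const_mul α
  have h2 : HasDerivAt (fun y : ℝ => Real.sin (α * (y + c₁)))
      (Real.cos (α * (x + c₁)) * α) x := ((Real.hasDerivAt_sin (α * (x + c₁))).comp x h :)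
  simp only [SN, CN]
  convert h2 using 1
  ring

lemma hasDerivAt_CN (x : ℝ) :
    HasDerivAt (fun y => CN α β c₁ c₂ y) (-(α * SN α β c₁ c₂ x)) x := by
  have h : HasDerivAt (fun y : ℝ => α * (y + c₁)) α x := by
    simpa using ((hasDerivAt_id x).add_const c₁).const_mul α
  have h2 : HasDerivAt (fun y : ℝ => Real.cos (α * (y + c₁)))
      (-Real.sin (α * (x + c₁)) * α) x := ((Real.hasDerivAt_cos (α * (x + c₁))).comp x h :)
  simp only [CN, SN]
  convert h2 using 1
  ring

lemma hasDerivAt_SH (x : ℝ) :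
    HasDerivAt (fun y => SH α β c₁ c₂ y) (β * CH α β c₁ c₂ x) x := by
  have h : HasDerivAt (fun y : ℝ => β * (y + c₂)) β x := by
    simpa using ((hasDerivAt_id x).add_const c₂).const_mul β
  have h2 : HasDerivAt (fun y : ℝ => Real.sinh (β * (y + c₂)))
      (Real.cosh (β * (x + c₂)) * β) x := ((Real.hasDerivAt_sinh (β * (x + c₂))).comp x h :)
  simp only [SH, CH]
  convert h2 using 1
  ring

lemma hasDerivAt_CH (x : ℝ) :
    HasDerivAt (fun y => CH α β c₁ c₂ y) (β * SH α β c₁ c₂ x) x := by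
  have h : HasDerivAt (fun y : ℝ => β * (y + c₂)) β x := by
    simpa using ((hasDerivAt_id x).add_const c₂).const_mul β
  have h2 : HasDerivAt (fun y : ℝ => Real.cosh (β * (y + c₂)))
      (Real.sinh (β * (x + c₂)) * β) x := ((Real.hasDerivAt_cosh (β * (x + c₂))).comp x h :)
  simp only [CH, SH]
  convert h2 using 1
  ring

lemma hasDerivAt_DD (x : ℝ) :
    HasDerivAt (fun y => DD α β c₁ c₂ y) (DP α β c₁ c₂ x) x := by
  have hsn := hasDerivAt_SN (α := α) (β := β) (c₁ := c₁) (c₂ := c₂) x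
  have hch := hasDerivAt_CH (α := α) (β := β) (c₁ := c₁) (c₂ := c₂) x
  have h := ((hch.pow 2).const_mul (α^2)).add ((hsn.pow 2).const_mul (β^2))
  have e : (fun y => DD α β c₁ c₂ y)
      = (fun y => α^2 * CH α β c₁ c₂ y ^ 2 + β^2 * SN α β c₁ c₂ y ^ 2) := by
    funext y; simp only [DD, DDv]
  rw [e]
  refine h.congr_deriv (Eq.symm ?_)
  simp only [DP, DPv]
  push_cast
  ring

lemma hasDerivAt_EE (x : ℝ) :
    HasDerivAt (fun y => EE α β c₁ c₂ y)
      (-(α^2+β^2) * SN α β c₁ c₂ x * CH α β c₁ c₂ x) x := by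
  have hsn := hasDerivAt_SN (α := α) (β := β) (c₁ := c₁) (c₂ := c₂) x
  have hcn := hasDerivAt_CN (α := α) (β := β) (c₁ := c₁) (c₂ := c₂) x
  have hsh := hasDerivAt_SH (α := α) (β := β) (c₁ := c₁) (c₂ := c₂) x
  have hch := hasDerivAt_CH (α := α) (β := β) (c₁ := c₁) (c₂ := c₂) x
  have h := ((hcn.mul hch).const_mul α).sub ((hsn.mul hsh).const_mul β)
  have e : (fun y => EE α β c₁ c₂ y)
      = (fun y => α * (CN α β c₁ c₂ y * CH α β c₁ c₂ y)
          - β * (SN α β c₁ c₂ y * SH α β c₁ c₂ y)) := by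
    funext y; simp only [EE, EEv]; ring
  rw [e]
  refine h.congr_deriv (Eq.symm ?_)
  ring

lemma hasDerivAt_NN (x : ℝ) :
    HasDerivAt (fun y => NN α β c₁ c₂ y) (NP α β c₁ c₂ x) x := by
  have hsn := hasDerivAt_SN (α := α) (β := β) (c₁ := c₁) (c₂ := c₂) x
  have hcn := hasDerivAt_CN (α := α) (β := β) (c₁ := c₁) (c₂ := c₂) x
  have hsh := hasDerivAt_SH (α := α) (β := β) (c₁ := c₁) (c₂ := c₂) x
  have hch := hasDerivAt_CH (α := α) (β := β) (c₁ := c₁) (c₂ := c₂) x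
  have h1 := ((hsn.pow 5).mul (hcn.pow 1)).const_mul ((-8)*α*β^8)
  have h2 := (((hsn.pow 4).mul (hsh.pow 1)).mul (hch.pow 1)).const_mul ((8)*α^2*β^7)
  have h3 := ((hsn.pow 3).mul (hcn.pow 1)).const_mul ((64/3)*α^3*β^6)
  have h4 := (((hsn.pow 3).mul (hcn.pow 1)).mul (hch.pow 2)).const_mul ((-48)*α^3*β^6)
  have h5 := ((hsn.pow 5).mul (hcn.pow 1)).const_mul ((8/3)*α^3*β^6)
  have h6 := (((hsn.pow 2).mul (hsh.pow 1)).mul (hch.pow 1)).const_mul ((64)*α^4*β^5)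
  have h7 := (((hsn.pow 2).mul (hsh.pow 1)).mul (hch.pow 3)).const_mul ((-16)*α^4*β^5)
  have h8 := (((hsn.pow 4).mul (hsh.pow 1)).mul (hch.pow 1)).const_mul ((-24)*α^4*β^5)
  have h9 := (((hsn.pow 1).mul (hcn.pow 1)).mul (hch.pow 2)).const_mul ((-64)*α^5*β^4)
  have h10 := (((hsn.pow 1).mul (hcn.pow 1)).mul (hch.pow 4)).const_mul ((24)*α^5*β^4)
  have h11 := (((hsn.pow 3).mul (hcn.pow 1)).mul (hch.pow 2)).const_mul ((16)*α^5*β^4)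
  have h12 := ((hsh.pow 1).mul (hch.pow 3)).const_mul ((-64/3)*α^6*β^3)
  have h13 := ((hsh.pow 1).mul (hch.pow 5)).const_mul ((-8/3)*α^6*β^3)
  have h14 := (((hsn.pow 2).mul (hsh.pow 1)).mul (hch.pow 3)).const_mul ((48)*α^6*β^3)
  have h15 := (((hsn.pow 1).mul (hcn.pow 1)).mul (hch.pow 4)).const_mul ((-8)*α^7*β^2)
  have h16 := ((hsh.pow 1).mul (hch.pow 5)).const_mul ((8)*α^8*β)
  have hsum := (h1.add (h2.add (h3.add (h4.add (h5.add (h6.add (h7.add (h8.add (h9.add (h10.add (h11.add (h12.add (h13.add (h14.add (h15.add h16)))))))))))))))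
  have e : (fun y => NN α β c₁ c₂ y)
      = (fun y => ((-8)*α*β^8) * (SN α β c₁ c₂ y ^ 5 * CN α β c₁ c₂ y ^ 1) + (((8)*α^2*β^7) * (SN α β c₁ c₂ y ^ 4 * SH α β c₁ c₂ y ^ 1 * CH α β c₁ c₂ y ^ 1) + (((64/3)*α^3*β^6) * (SN α β c₁ c₂ y ^ 3 * CN α β c₁ c₂ y ^ 1) + (((-48)*α^3*β^6) * (SN α β c₁ c₂ y ^ 3 * CN α β c₁ c₂ y ^ 1 * CH α β c₁ c₂ y ^ 2) + (((8/3)*α^3*β^6) * (SN α β c₁ c₂ y ^ 5 * CN α β c₁ c₂ y ^ 1) + (((64)*α^4*β^5) * (SN α β c₁ c₂ y ^ 2 * SH α β c₁ c₂ y ^ 1 * CH α β c₁ c₂ y ^ 1) + (((-16)*α^4*β^5) * (SN α β c₁ c₂ y ^ 2 * SH α β c₁ c₂ y ^ 1 * CH α β c₁ c₂ y ^ 3) + (((-24)*α^4*β^5) * (SN α β c₁ c₂ y ^ 4 * SH α β c₁ c₂ y ^ 1 * CH α β c₁ c₂ y ^ 1) + (((-64)*α^5*β^4) * (SN α β c₁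 c₂ y ^ 1 * CN α β c₁ c₂ y ^ 1 * CH α β c₁ c₂ y ^ 2) + (((24)*α^5*β^4) * (SN α β c₁ c₂ y ^ 1 * CN α β c₁ c₂ y ^ 1 * CH α β c₁ c₂ y ^ 4) + (((16)*α^5*β^4) * (SN α β c₁ c₂ y ^ 3 * CN α β c₁ c₂ y ^ 1 * CH α β c₁ c₂ y ^ 2) + (((-64/3)*α^6*β^3) * (SH α β c₁ c₂ y ^ 1 * CH α β c₁ c₂ y ^ 3) + (((-8/3)*α^6*β^3) * (SH α β c₁ c₂ y ^ 1 * CH α β c₁ c₂ y ^ 5) + (((48)*α^6*β^3) * (SN α β c₁ c₂ y ^ 2 * SH α β c₁ c₂ y ^ 1 * CH α β c₁ c₂ y ^ 3) + (((-8)*α^7*β^2) * (SN α β c₁ c₂ y ^ 1 * CN α β c₁ c₂ y ^ 1 * CH α β c₁ c₂ y ^ 4) + (((8)*α^8*β) * (SH α β c₁ c₂ y ^ 1 * CH α β c₁ c₂ y ^ 5))))))))))))))))) := by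
    funext y; simp only [NN, NNv]; ring
  rw [e]
  refine hsum.congr_deriv (Eq.symm ?_)
  simp only [NP, NPv, Pi.pow_apply, Pi.mul_apply]
  push_cast
  ring

/-! ### The key algebraic identity -/

lemma key (a b s c sh ch : ℝ) (h1 : s^2 + c^2 = 1) (h2 : ch^2 - sh^2 = 1) :
    NPv a b s c sh ch * DDv a b s ch - 3 * NNv a b s c sh ch * DPv a b s c sh ch
      = 16*a^2*b^2*((GGv a b s c sh ch)^2 - 4*a^2*b^2*(EEv a b s c sh ch)^4) := by
  simp only [NPv, NNv, DDv, DPv, GGv, EEv]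
  linear_combination ((8)*a^2*b^10*s^6 + (-64)*a^4*b^8*s^4 + (40)*a^4*b^8*s^4*ch^2 + (-64)*a^4*b^8*s^4*sh^2 + (-8/3)*a^4*b^8*s^6 + (128)*a^5*b^7*s^3*c*sh*ch + (320)*a^6*b^6*s^2*ch^2 + (-328)*a^6*b^6*s^2*ch^4 + (640)*a^6*b^6*s^2*sh^2*ch^2 + (-64)*a^6*b^6*s^2*c^2*ch^2 + (-104/3)*a^6*b^6*s^4*ch^2 + (-384)*a^7*b^5*s*c*sh*ch^3 + (24)*a^8*b^4*ch^6 + (-64)*a^8*b^4*sh^2*ch^4 + (64)*a^8*b^4*c^2*ch^4 + (-40)*a^8*b^4*s^2*ch^4 + (-8)*a^10*b^2*ch^6) * h1 + ((-8)*a^2*b^10*s^6 + (64)*a^4*b^8*s^4 + (-40)*a^4*b^8*s^4*ch^2 + (-64)*a^4*b^8*s^4*sh^2 + (-40)*a^4*b^8*s^6 + (384)*a^5*b^7*s^3*c*sh*ch + (-320)*a^6*b^6*s^2*ch^2 + (-104/3)*a^6*b^6*s^2*ch^4 + (64)*a^6*b^6*s^2*sh^2*ch^2 + (312)*a^6*b^6*s^4*ch^2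 + (-128)*a^7*b^5*s*c*sh*ch^3 + (-8/3)*a^8*b^4*ch^6 + (-24)*a^8*b^4*s^2*ch^4 + (8)*a^10*b^2*ch^6) * h2

lemma key' (x : ℝ) :
    NP α β c₁ c₂ x * DD α β c₁ c₂ x - 3 * NN α β c₁ c₂ x * DP α β c₁ c₂ x
      = 16*α^2*β^2*((GG α β c₁ c₂ x)^2 - 4*α^2*β^2*(EE α β c₁ c₂ x)^4) := by
  simp only [NP, NN, DD, DP, GG, EE]
  exact key α β _ _ _ _ (Real.sin_sq_add_cos_sq _) (Real.cosh_sq_sub_sinh_sq _)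

/-! ### Derivative of H -/

lemma hasDerivAt_BF (hα : 0 < α) (x : ℝ) :
    HasDerivAt (fun y => BF α β c₁ c₂ y) (BX α β c₁ c₂ x) x := by
  have hE := hasDerivAt_EE (α := α) (β := β) (c₁ := c₁) (c₂ := c₂) x
  have hD := hasDerivAt_DD (α := α) (β := β) (c₁ := c₁) (c₂ := c₂) x
  have h := (hE.const_mul (2*Real.sqrt 2*α*β)).div hD (DD_ne hα x)
  have e : (fun y => BF α β c₁ c₂ y)
      = (fun y => 2*Real.sqrt 2*α*β * EE α β c₁ c₂ y / DD α β c₁ c₂ y) := by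
    funext y; simp only [BF]
  rw [e]
  refine h.congr_deriv (Eq.symm ?_)
  simp only [BX, GG, GGv, EE, DD, DP]
  ring

lemma hasDerivAt_HH (hα : 0 < α) (x : ℝ) :
    HasDerivAt (fun y => HH α β c₁ c₂ y)
      (2 * BX α β c₁ c₂ x ^ 2 - BF α β c₁ c₂ x ^ 4) x := by
  have hN := hasDerivAt_NN (α := α) (β := β) (c₁ := c₁) (c₂ := c₂) x
  have hD := hasDerivAt_DD (α := α) (β := β) (c₁ := c₁) (c₂ := c₂) x
  have hDne := DD_ne (β := β) (c₁ := c₁) (c₂ := c₂) hα x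
  have h := hN.div (hD.pow 3) (pow_ne_zero 3 hDne)
  have e : (fun y => HH α β c₁ c₂ y)
      = (fun y => NN α β c₁ c₂ y / DD α β c₁ c₂ y ^ 3) := by
    funext y; simp only [HH]
  rw [e]
  refine h.congr_deriv (Eq.symm ?_)
  simp only [Pi.pow_apply]
  have h2 : Real.sqrt 2 ^ 2 = 2 := Real.sq_sqrt (by norm_num)
  have e1 : BX α β c₁ c₂ x ^ 2 = 8*α^2*β^2*GG α β c₁ c₂ x ^2 / DD α β c₁ c₂ x ^4 := by
    simp only [BX]
    rw [div_pow]
    congr 1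
    · linear_combination (4*α^2*β^2*GG α β c₁ c₂ x ^2) * h2
    · ring
  have e2 : BF α β c₁ c₂ x ^ 4 = 64*α^4*β^4*EE α β c₁ c₂ x ^4 / DD α β c₁ c₂ x ^4 := by
    simp only [BF]
    rw [div_pow]
    congr 1
    linear_combination (16*α^4*β^4*EE α β c₁ c₂ x^4*(Real.sqrt 2 ^2 + 2)) * h2
  rw [e1, e2]
  rw [← mul_div_assoc, div_sub_div_same]
  rw [div_eq_div_iff (by positivity) (by positivity)]
  push_cast
  linear_combination (-(DD α β c₁ c₂ x ^ 6)) * key' (α := α) (β := β) (c₁ := c₁) (c₂ := c₂) x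

/-! ### Helper bounds -/

lemma abs_mul_le_one_aux {u M w : ℝ} (h : |u| ≤ M) (h2 : |w| ≤ 1) : |u * w| ≤ M := by
  rw [abs_mul]
  calc |u| * |w| ≤ M * 1 := mul_le_mul h h2 (abs_nonneg _) ((abs_nonneg u).trans h)
  _ = M := mul_one M

lemma abs_pow_le_one {w : ℝ} (h : |w| ≤ 1) (n : ℕ) : |w ^ n| ≤ 1 := by
  rw [abs_pow]; exact pow_le_one₀ (abs_nonneg _) h

lemma tendsto_bdd_mul_zero {f g : ℝ → ℝ} {l : Filter ℝ} {M : ℝ}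
    (hf : ∀ x, |f x| ≤ M) (hg : Tendsto g l (𝓝 0)) :
    Tendsto (fun x => f x * g x) l (𝓝 0) := by
  have hM : Tendsto (fun x => M * |g x|) l (𝓝 0) := by simpa using hg.abs.const_mul M
  refine squeeze_zero_norm (fun x => ?_) hM
  rw [Real.norm_eq_abs, abs_mul]
  exact mul_le_mul (hf x) le_rfl (abs_nonneg _) ((abs_nonneg (f x)).trans (hf x))

set_option maxHeartbeats 1000000 in
lemma abs_RR_le (x : ℝ) :
    |RRv α β (SN α β c₁ c₂ x) (CN α β c₁ c₂ x) (VV α β c₁ c₂ x) (UU α β c₁ c₂ x)|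
      ≤ |(-8)*α*β^8| + |(8)*α^2*β^7| + |(-48)*α^3*β^6| + |(64/3)*α^3*β^6| + |(8/3)*α^3*β^6| + |(-16)*α^4*β^5| + |(64)*α^4*β^5| + |(-24)*α^4*β^5| + |(24)*α^5*β^4| + |(-64)*α^5*β^4| + |(16)*α^5*β^4| + |(-64/3)*α^6*β^3| + |(48)*α^6*β^3| + |(-8)*α^7*β^2| := by
  have hs := abs_SN_le (α := α) (β := β) (c₁ := c₁) (c₂ := c₂) x
  have hc := abs_CN_le (α := α) (β := β) (c₁ := c₁) (c₂ := c₂) x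
  have hv := abs_VV_le (α := α) (β := β) (c₁ := c₁) (c₂ := c₂) x
  have hu := abs_UU_le (α := α) (β := β) (c₁ := c₁) (c₂ := c₂) x
  set SNx := SN α β c₁ c₂ x
  set CNx := CN α β c₁ c₂ x
  set VVx := VV α β c₁ c₂ x
  set UUx := UU α β c₁ c₂ x
  simp only [RRv]
  have B1 : |(-8)*α*β^8*SNx^5*CNx*UUx^4| ≤ |(-8)*α*β^8| := (abs_mul_le_one_aux (abs_mul_le_one_aux (abs_mul_le_one_aux le_rfl (abs_pow_le_one hs 5)) hc) (abs_pow_le_one hu 4))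
  have B2 : |(8)*α^2*β^7*SNx^4*VVx*UUx^2| ≤ |(8)*α^2*β^7| := (abs_mul_le_one_aux (abs_mul_le_one_aux (abs_mul_le_one_aux le_rfl (abs_pow_le_one hs 4)) hv) (abs_pow_le_one hu 2))
  have B3 : |(-48)*α^3*β^6*SNx^3*CNx*UUx^2| ≤ |(-48)*α^3*β^6| := (abs_mul_le_one_aux (abs_mul_le_one_aux (abs_mul_le_one_aux le_rfl (abs_pow_le_one hs 3)) hc) (abs_pow_le_one hu 2))
  have B4 : |(64/3)*α^3*β^6*SNx^3*CNx*UUx^4| ≤ |(64/3)*α^3*β^6| := (abs_mul_le_one_aux (abs_mul_le_one_aux (abs_mul_le_one_aux le_rfl (abs_pow_le_one hs 3)) hc) (abs_pow_le_one hu 4))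
  have B5 : |(8/3)*α^3*β^6*SNx^5*CNx*UUx^4| ≤ |(8/3)*α^3*β^6| := (abs_mul_le_one_aux (abs_mul_le_one_aux (abs_mul_le_one_aux le_rfl (abs_pow_le_one hs 5)) hc) (abs_pow_le_one hu 4))
  have B6 : |(-16)*α^4*β^5*SNx^2*VVx| ≤ |(-16)*α^4*β^5| := (abs_mul_le_one_aux (abs_mul_le_one_aux le_rfl (abs_pow_le_one hs 2)) hv)
  have B7 : |(64)*α^4*β^5*SNx^2*VVx*UUx^2| ≤ |(64)*α^4*β^5| := (abs_mul_le_one_aux (abs_mul_le_one_aux (abs_mul_le_one_aux le_rfl (abs_pow_le_one hs 2)) hv) (abs_pow_le_one hu 2))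
  have B8 : |(-24)*α^4*β^5*SNx^4*VVx*UUx^2| ≤ |(-24)*α^4*β^5| := (abs_mul_le_one_aux (abs_mul_le_one_aux (abs_mul_le_one_aux le_rfl (abs_pow_le_one hs 4)) hv) (abs_pow_le_one hu 2))
  have B9 : |(24)*α^5*β^4*SNx*CNx| ≤ |(24)*α^5*β^4| := (abs_mul_le_one_aux (abs_mul_le_one_aux le_rfl hs) hc)
  have B10 : |(-64)*α^5*β^4*SNx*CNx*UUx^2| ≤ |(-64)*α^5*β^4| := (abs_mul_le_one_aux (abs_mul_le_one_aux (abs_mul_le_one_aux le_rfl hs) hc) (abs_pow_le_one hu 2))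
  have B11 : |(16)*α^5*β^4*SNx^3*CNx*UUx^2| ≤ |(16)*α^5*β^4| := (abs_mul_le_one_aux (abs_mul_le_one_aux (abs_mul_le_one_aux le_rfl (abs_pow_le_one hs 3)) hc) (abs_pow_le_one hu 2))
  have B12 : |(-64/3)*α^6*β^3*VVx| ≤ |(-64/3)*α^6*β^3| := (abs_mul_le_one_aux le_rfl hv)
  have B13 : |(48)*α^6*β^3*SNx^2*VVx| ≤ |(48)*α^6*β^3| := (abs_mul_le_one_aux (abs_mul_le_one_aux le_rfl (abs_pow_le_one hs 2)) hv)
  have B14 : |(-8)*α^7*β^2*SNx*CNx| ≤ |(-8)*α^7*β^2| := (abs_mul_le_one_aux (abs_mul_le_one_aux le_rfl hs) hc)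
  have S2 : |(-8)*α*β^8*SNx^5*CNx*UUx^4 + (8)*α^2*β^7*SNx^4*VVx*UUx^2| ≤ |(-8)*α*β^8| + |(8)*α^2*β^7| := (abs_add_le _ _).trans (add_le_add B1 B2)
  have S3 : |(-8)*α*β^8*SNx^5*CNx*UUx^4 + (8)*α^2*β^7*SNx^4*VVx*UUx^2 + (-48)*α^3*β^6*SNx^3*CNx*UUx^2| ≤ |(-8)*α*β^8| + |(8)*α^2*β^7| + |(-48)*α^3*β^6| := (abs_add_le _ _).trans (add_le_add S2 B3)
  have S4 : |(-8)*α*β^8*SNx^5*CNx*UUx^4 + (8)*α^2*β^7*SNx^4*VVx*UUx^2 + (-48)*α^3*β^6*SNx^3*CNx*UUx^2 + (64/3)*α^3*β^6*SNx^3*CNx*UUx^4| ≤ |(-8)*α*β^8| + |(8)*α^2*β^7| + |(-48)*α^3*β^6| + |(64/3)*α^3*β^6| := (abs_add_le _ _).trans (add_le_add S3 B4)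
  have S5 : |(-8)*α*β^8*SNx^5*CNx*UUx^4 + (8)*α^2*β^7*SNx^4*VVx*UUx^2 + (-48)*α^3*β^6*SNx^3*CNx*UUx^2 + (64/3)*α^3*β^6*SNx^3*CNx*UUx^4 + (8/3)*α^3*β^6*SNx^5*CNx*UUx^4| ≤ |(-8)*α*β^8| + |(8)*α^2*β^7| + |(-48)*α^3*β^6| + |(64/3)*α^3*β^6| + |(8/3)*α^3*β^6| := (abs_add_le _ _).trans (add_le_add S4 B5)
  have S6 : |(-8)*α*β^8*SNx^5*CNx*UUx^4 + (8)*α^2*β^7*SNx^4*VVx*UUx^2 + (-48)*α^3*β^6*SNx^3*CNx*UUx^2 + (64/3)*α^3*β^6*SNx^3*CNx*UUx^4 + (8/3)*α^3*β^6*SNx^5*CNx*UUx^4 + (-16)*α^4*β^5*SNx^2*VVx| ≤ |(-8)*α*β^8| + |(8)*α^2*β^7| + |(-48)*α^3*β^6| + |(64/3)*α^3*β^6| + |(8/3)*α^3*β^6| + |(-16)*α^4*β^5| := (abs_add_le _ _).trans (add_le_add S5 B6)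
  have S7 : |(-8)*α*β^8*SNx^5*CNx*UUx^4 + (8)*α^2*β^7*SNx^4*VVx*UUx^2 + (-48)*α^3*β^6*SNx^3*CNx*UUx^2 + (64/3)*α^3*β^6*SNx^3*CNx*UUx^4 + (8/3)*α^3*β^6*SNx^5*CNx*UUx^4 + (-16)*α^4*β^5*SNx^2*VVx + (64)*α^4*β^5*SNx^2*VVx*UUx^2| ≤ |(-8)*α*β^8| + |(8)*α^2*β^7| + |(-48)*α^3*β^6| + |(64/3)*α^3*β^6| + |(8/3)*α^3*β^6| + |(-16)*α^4*β^5| + |(64)*α^4*β^5| := (abs_add_le _ _).trans (add_le_add S6 B7)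
  have S8 : |(-8)*α*β^8*SNx^5*CNx*UUx^4 + (8)*α^2*β^7*SNx^4*VVx*UUx^2 + (-48)*α^3*β^6*SNx^3*CNx*UUx^2 + (64/3)*α^3*β^6*SNx^3*CNx*UUx^4 + (8/3)*α^3*β^6*SNx^5*CNx*UUx^4 + (-16)*α^4*β^5*SNx^2*VVx + (64)*α^4*β^5*SNx^2*VVx*UUx^2 + (-24)*α^4*β^5*SNx^4*VVx*UUx^2| ≤ |(-8)*α*β^8| + |(8)*α^2*β^7| + |(-48)*α^3*β^6| + |(64/3)*α^3*β^6| + |(8/3)*α^3*β^6| + |(-16)*α^4*β^5| + |(64)*α^4*β^5| + |(-24)*α^4*β^5| := (abs_add_le _ _).trans (add_le_add S7 B8)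
  have S9 : |(-8)*α*β^8*SNx^5*CNx*UUx^4 + (8)*α^2*β^7*SNx^4*VVx*UUx^2 + (-48)*α^3*β^6*SNx^3*CNx*UUx^2 + (64/3)*α^3*β^6*SNx^3*CNx*UUx^4 + (8/3)*α^3*β^6*SNx^5*CNx*UUx^4 + (-16)*α^4*β^5*SNx^2*VVx + (64)*α^4*β^5*SNx^2*VVx*UUx^2 + (-24)*α^4*β^5*SNx^4*VVx*UUx^2 + (24)*α^5*β^4*SNx*CNx| ≤ |(-8)*α*β^8| + |(8)*α^2*β^7| + |(-48)*α^3*β^6| + |(64/3)*α^3*β^6| + |(8/3)*α^3*β^6| + |(-16)*α^4*β^5| + |(64)*α^4*β^5| + |(-24)*α^4*β^5| + |(24)*α^5*β^4| := (abs_add_le _ _).trans (add_le_add S8 B9)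
  have S10 : |(-8)*α*β^8*SNx^5*CNx*UUx^4 + (8)*α^2*β^7*SNx^4*VVx*UUx^2 + (-48)*α^3*β^6*SNx^3*CNx*UUx^2 + (64/3)*α^3*β^6*SNx^3*CNx*UUx^4 + (8/3)*α^3*β^6*SNx^5*CNx*UUx^4 + (-16)*α^4*β^5*SNx^2*VVx + (64)*α^4*β^5*SNx^2*VVx*UUx^2 + (-24)*α^4*β^5*SNx^4*VVx*UUx^2 + (24)*α^5*β^4*SNx*CNx + (-64)*α^5*β^4*SNx*CNx*UUx^2| ≤ |(-8)*α*β^8| + |(8)*α^2*β^7| + |(-48)*α^3*β^6| + |(64/3)*α^3*β^6| + |(8/3)*α^3*β^6| + |(-16)*α^4*β^5| + |(64)*α^4*β^5| + |(-24)*α^4*β^5| + |(24)*α^5*β^4| + |(-64)*α^5*β^4| := (abs_add_le _ _).trans (add_le_add S9 B10)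
  have S11 : |(-8)*α*β^8*SNx^5*CNx*UUx^4 + (8)*α^2*β^7*SNx^4*VVx*UUx^2 + (-48)*α^3*β^6*SNx^3*CNx*UUx^2 + (64/3)*α^3*β^6*SNx^3*CNx*UUx^4 + (8/3)*α^3*β^6*SNx^5*CNx*UUx^4 + (-16)*α^4*β^5*SNx^2*VVx + (64)*α^4*β^5*SNx^2*VVx*UUx^2 + (-24)*α^4*β^5*SNx^4*VVx*UUx^2 + (24)*α^5*β^4*SNx*CNx + (-64)*α^5*β^4*SNx*CNx*UUx^2 + (16)*α^5*β^4*SNx^3*CNx*UUx^2| ≤ |(-8)*α*β^8| + |(8)*α^2*β^7| + |(-48)*α^3*β^6| + |(64/3)*α^3*β^6| + |(8/3)*α^3*β^6| + |(-16)*α^4*β^5| + |(64)*α^4*β^5| + |(-24)*α^4*β^5| + |(24)*α^5*β^4| + |(-64)*α^5*β^4| + |(16)*α^5*β^4| := (abs_add_le _ _).trans (add_le_add S10 B11)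
  have S12 : |(-8)*α*β^8*SNx^5*CNx*UUx^4 + (8)*α^2*β^7*SNx^4*VVx*UUx^2 + (-48)*α^3*β^6*SNx^3*CNx*UUx^2 + (64/3)*α^3*β^6*SNx^3*CNx*UUx^4 + (8/3)*α^3*β^6*SNx^5*CNx*UUx^4 + (-16)*α^4*β^5*SNx^2*VVx + (64)*α^4*β^5*SNx^2*VVx*UUx^2 + (-24)*α^4*β^5*SNx^4*VVx*UUx^2 + (24)*α^5*β^4*SNx*CNx + (-64)*α^5*β^4*SNx*CNx*UUx^2 + (16)*α^5*β^4*SNx^3*CNx*UUx^2 + (-64/3)*α^6*β^3*VVx| ≤ |(-8)*α*β^8| + |(8)*α^2*β^7| + |(-48)*α^3*β^6| + |(64/3)*α^3*β^6| + |(8/3)*α^3*β^6| + |(-16)*α^4*β^5| + |(64)*α^4*β^5| + |(-24)*α^4*β^5| + |(24)*α^5*β^4| + |(-64)*α^5*β^4| + |(16)*α^5*β^4| + |(-64/3)*α^6*β^3| := (abs_add_le _ _).trans (add_le_add S11 B12)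
  have S13 : |(-8)*α*β^8*SNx^5*CNx*UUx^4 + (8)*α^2*β^7*SNx^4*VVx*UUx^2 + (-48)*α^3*β^6*SNx^3*CNx*UUx^2 + (64/3)*α^3*β^6*SNx^3*CNx*UUx^4 + (8/3)*α^3*β^6*SNx^5*CNx*UUx^4 + (-16)*α^4*β^5*SNx^2*VVx + (64)*α^4*β^5*SNx^2*VVx*UUx^2 + (-24)*α^4*β^5*SNx^4*VVx*UUx^2 + (24)*α^5*β^4*SNx*CNx + (-64)*α^5*β^4*SNx*CNx*UUx^2 + (16)*α^5*β^4*SNx^3*CNx*UUx^2 + (-64/3)*α^6*β^3*VVx + (48)*α^6*β^3*SNx^2*VVx| ≤ |(-8)*α*β^8| + |(8)*α^2*β^7| + |(-48)*α^3*β^6| + |(64/3)*α^3*β^6| + |(8/3)*α^3*β^6| + |(-16)*α^4*β^5| + |(64)*α^4*β^5| + |(-24)*α^4*β^5| + |(24)*α^5*β^4| + |(-64)*α^5*β^4| + |(16)*α^5*β^4| + |(-64/3)*α^6*β^3| + |(48)*α^6*β^3| := (abs_add_le _ _).trans (add_le_add S12 B13)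
  have S14 : |(-8)*α*β^8*SNx^5*CNx*UUx^4 + (8)*α^2*β^7*SNx^4*VVx*UUx^2 + (-48)*α^3*β^6*SNx^3*CNx*UUx^2 + (64/3)*α^3*β^6*SNx^3*CNx*UUx^4 + (8/3)*α^3*β^6*SNx^5*CNx*UUx^4 + (-16)*α^4*β^5*SNx^2*VVx + (64)*α^4*β^5*SNx^2*VVx*UUx^2 + (-24)*α^4*β^5*SNx^4*VVx*UUx^2 + (24)*α^5*β^4*SNx*CNx + (-64)*α^5*β^4*SNx*CNx*UUx^2 + (16)*α^5*β^4*SNx^3*CNx*UUx^2 + (-64/3)*α^6*β^3*VVx + (48)*α^6*β^3*SNx^2*VVx + (-8)*α^7*β^2*SNx*CNx| ≤ |(-8)*α*β^8| + |(8)*α^2*β^7| + |(-48)*α^3*β^6| + |(64/3)*α^3*β^6| + |(8/3)*α^3*β^6| + |(-16)*α^4*β^5| + |(64)*α^4*β^5| + |(-24)*α^4*β^5| + |(24)*α^5*β^4| + |(-64)*α^5*β^4| + |(16)*α^5*β^4| + |(-64/3)*α^6*β^3| + |(48)*α^6*β^3| + |(-8)*α^7*β^2| := (abs_add_le _ _).trans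 (add_le_add S13 B14)
  exact S14


/-! ### Derivative of V and integrability of U² -/

lemma CH_sq_sub_SH_sq (x : ℝ) : CH α β c₁ c₂ x ^ 2 - SH α β c₁ c₂ x ^ 2 = 1 := by
  simp only [CH, SH]; exact Real.cosh_sq_sub_sinh_sq _

lemma hasDerivAt_VV (x : ℝ) :
    HasDerivAt (fun y => VV α β c₁ c₂ y) (β * UU α β c₁ c₂ x ^ 2) x := by
  have hsh := hasDerivAt_SH (α := α) (β := β) (c₁ := c₁) (c₂ := c₂) x
  have hch := hasDerivAt_CH (α := α) (β := β) (c₁ := c₁) (c₂ := c₂) x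
  have h := hsh.div hch (CH_ne x)
  have e : (fun y => VV α β c₁ c₂ y)
      = (fun y => SH α β c₁ c₂ y / CH α β c₁ c₂ y) := by
    funext y; simp only [VV]
  rw [e]
  refine h.congr_deriv (Eq.symm ?_)
  have hc2 := CH_sq_sub_SH_sq (α := α) (β := β) (c₁ := c₁) (c₂ := c₂) x
  simp only [UU]
  field_simp [CH_ne (α := α) (β := β) (c₁ := c₁) (c₂ := c₂) x]
  linear_combination (-β) * hc2

/-! ### Limits -/

lemma tendsto_CH_atTop (hβ : 0 < β) :
    Tendsto (fun x => CH α β c₁ c₂ x) atTop atTop := by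
  have hq : Tendsto (fun x : ℝ => β * (x + c₂)) atTop atTop :=
    (tendsto_atTop_add_const_right _ c₂ tendsto_id).const_mul_atTop hβ
  have hhalf : Tendsto (fun x : ℝ => Real.exp (β * (x + c₂)) / 2) atTop atTop :=
    (Real.tendsto_exp_atTop.comp hq).atTop_div_const (by norm_num)
  apply tendsto_atTop_mono _ hhalf
  intro x
  simp only [CH]
  rw [Real.cosh_eq]
  have := (Real.exp_pos (-(β * (x + c₂)))).le
  linarith

lemma tendsto_CH_atBot (hβ : 0 < β) :
    Tendsto (fun x => CH α β c₁ c₂ x) atBot atTop := by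
  have hq : Tendsto (fun x : ℝ => β * (x + c₂)) atBot atBot :=
    (tendsto_atBot_add_const_right _ c₂ tendsto_id).const_mul_atBot hβ
  have hq2 : Tendsto (fun x : ℝ => -(β * (x + c₂))) atBot atTop := tendsto_neg_atBot_atTop.comp hq
  have hhalf : Tendsto (fun x : ℝ => Real.exp (-(β * (x + c₂))) / 2) atBot atTop :=
    (Real.tendsto_exp_atTop.comp hq2).atTop_div_const (by norm_num)
  apply tendsto_atTop_mono _ hhalf
  intro x
  simp only [CH]
  rw [Real.cosh_eq]
  have := (Real.exp_pos (β * (x + c₂))).le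
  linarith

lemma tendsto_UU_atTop (hβ : 0 < β) :
    Tendsto (fun x => UU α β c₁ c₂ x) atTop (𝓝 0) :=
  (tendsto_CH_atTop hβ).inv_tendsto_atTop

lemma tendsto_UU_atBot (hβ : 0 < β) :
    Tendsto (fun x => UU α β c₁ c₂ x) atBot (𝓝 0) :=
  (tendsto_CH_atBot hβ).inv_tendsto_atTop

lemma VV_eq (x : ℝ) :
    VV α β c₁ c₂ x = 1 - 2 / (Real.exp (2 * (β * (x + c₂))) + 1) := by
  simp only [VV, SH, CH]
  rw [Real.sinh_eq, Real.cosh_eq, two_mul, Real.exp_add, Real.exp_neg]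
  have h1 := Real.exp_pos (β * (x + c₂))
  have h2 : Real.exp (β * (x + c₂)) * Real.exp (β * (x + c₂)) + 1 > 0 := by positivity
  field_simp
  ring

lemma tendsto_VV_atTop (hβ : 0 < β) :
    Tendsto (fun x => VV α β c₁ c₂ x) atTop (𝓝 1) := by
  have hq : Tendsto (fun x : ℝ => 2 * (β * (x + c₂))) atTop atTop :=
    ((tendsto_atTop_add_const_right _ c₂ tendsto_id).const_mul_atTop hβ).const_mul_atTop
      (by norm_num)
  have hden : Tendsto (fun x : ℝ => Real.exp (2 * (β * (x + c₂))) + 1) atTop atTop :=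
    tendsto_atTop_add_const_right _ 1 (Real.tendsto_exp_atTop.comp hq)
  have h0 : Tendsto (fun x : ℝ => 2 / (Real.exp (2 * (β * (x + c₂))) + 1)) atTop (𝓝 0) := by
    simpa [div_eq_mul_inv] using hden.inv_tendsto_atTop.const_mul 2
  have h1 : Tendsto (fun x : ℝ => 1 - 2 / (Real.exp (2*(β*(x+c₂))) + 1)) atTop (𝓝 (1 - 0)) :=
    tendsto_const_nhds.sub h0
  rw [sub_zero] at h1
  exact Tendsto.congr (fun x => (VV_eq x).symm) h1

lemma tendsto_VV_atBot (hβ : 0 < β) :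
    Tendsto (fun x => VV α β c₁ c₂ x) atBot (𝓝 (-1)) := by
  have hq : Tendsto (fun x : ℝ => 2 * (β * (x + c₂))) atBot atBot :=
    ((tendsto_atBot_add_const_right _ c₂ tendsto_id).const_mul_atBot hβ).const_mul_atBot
      (by norm_num)
  have hden : Tendsto (fun x : ℝ => Real.exp (2 * (β * (x + c₂))) + 1) atBot (𝓝 (0 + 1)) :=
    (Real.tendsto_exp_atBot.comp hq).add_const 1
  have h2 : Tendsto (fun x : ℝ => 2 / (Real.exp (2 * (β * (x + c₂))) + 1)) atBot (𝓝 (2 / (0 + 1))) :=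
    tendsto_const_nhds.div hden (by norm_num)
  have h1 : Tendsto (fun x : ℝ => 1 - 2 / (Real.exp (2*(β*(x+c₂))) + 1)) atBot (𝓝 (1 - 2/(0+1))) :=
    tendsto_const_nhds.sub h2
  norm_num at h1
  exact Tendsto.congr (fun x => (VV_eq x).symm) h1

/-! ### The limit of H -/

lemma NNu_eq (hα : 0 < α) (x : ℝ) :
    HH α β c₁ c₂ x
      = ((8*α^8*β - 8/3*α^6*β^3) * VV α β c₁ c₂ x
          + RRv α β (SN α β c₁ c₂ x) (CN α β c₁ c₂ x) (VV α β c₁ c₂ x) (UU α β c₁ c₂ x)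
            * UU α β c₁ c₂ x ^ 2)
        / (α^2 + β^2 * SN α β c₁ c₂ x ^ 2 * UU α β c₁ c₂ x ^ 2) ^ 3 := by
  have hCH := CH_ne (α := α) (β := β) (c₁ := c₁) (c₂ := c₂) x
  have hden : (0:ℝ) < α^2 + β^2 * SN α β c₁ c₂ x ^ 2 * UU α β c₁ c₂ x ^ 2 :=
    add_pos_of_pos_of_nonneg (pow_pos hα 2) (by positivity)
  have hDD := DD_ne (β := β) (c₁ := c₁) (c₂ := c₂) hα x
  rw [HH, div_eq_div_iff (pow_ne_zero 3 hDD) (pow_ne_zero 3 hden.ne')]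
  simp only [NN, NNv, DD, DDv, VV, UU, RRv]
  field_simp
  ring

lemma tendsto_HH_aux (hα : 0 < α) {l : Filter ℝ} {w : ℝ}
    (hv : Tendsto (fun x => VV α β c₁ c₂ x) l (𝓝 w))
    (hu : Tendsto (fun x => UU α β c₁ c₂ x) l (𝓝 0)) :
    Tendsto (fun x => HH α β c₁ c₂ x) l
      (𝓝 ((8*α^8*β - 8/3*α^6*β^3) * w / (α^2)^3)) := by
  have hu2 : Tendsto (fun x => UU α β c₁ c₂ x ^ 2) l (𝓝 0) := by
    simpa using hu.pow 2
  have hRR : Tendsto (fun x =>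
      RRv α β (SN α β c₁ c₂ x) (CN α β c₁ c₂ x) (VV α β c₁ c₂ x) (UU α β c₁ c₂ x)
        * UU α β c₁ c₂ x ^ 2) l (𝓝 0) := by
    have hb : ∀ x, |RRv α β (SN α β c₁ c₂ x) (CN α β c₁ c₂ x) (VV α β c₁ c₂ x) (UU α β c₁ c₂ x)|
        ≤ |(-8)*α*β^8| + |(8)*α^2*β^7| + |(-48)*α^3*β^6| + |(64/3)*α^3*β^6| + |(8/3)*α^3*β^6| + |(-16)*α^4*β^5| + |(64)*α^4*β^5| + |(-24)*α^4*β^5| + |(24)*α^5*β^4| + |(-64)*α^5*β^4| + |(16)*α^5*β^4| + |(-64/3)*α^6*β^3| + |(48)*α^6*β^3| + |(-8)*α^7*β^2| := fun x => abs_RR_le x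
    exact tendsto_bdd_mul_zero hb hu2
  have hNUM : Tendsto (fun x =>
      (8*α^8*β - 8/3*α^6*β^3) * VV α β c₁ c₂ x
        + RRv α β (SN α β c₁ c₂ x) (CN α β c₁ c₂ x) (VV α β c₁ c₂ x) (UU α β c₁ c₂ x)
          * UU α β c₁ c₂ x ^ 2) l (𝓝 ((8*α^8*β - 8/3*α^6*β^3) * w + 0)) :=
    (hv.const_mul _).add hRR
  have hSNb : ∀ x, |β^2 * SN α β c₁ c₂ x ^ 2| ≤ β^2 := fun x =>
    abs_mul_le_one_aux (le_of_eq (abs_of_nonneg (sq_nonneg β))) (abs_pow_le_one (abs_SN_le x) 2)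
  have hSNu : Tendsto (fun x => β^2 * SN α β c₁ c₂ x ^ 2 * UU α β c₁ c₂ x ^ 2) l (𝓝 0) :=
    tendsto_bdd_mul_zero hSNb hu2
  have hDEN : Tendsto (fun x => (α^2 + β^2 * SN α β c₁ c₂ x ^ 2 * UU α β c₁ c₂ x ^ 2) ^ 3) l
      (𝓝 ((α^2 + 0)^3)) := (tendsto_const_nhds.add hSNu).pow 3
  have hne : ((α:ℝ)^2 + 0)^3 ≠ 0 := by
    rw [add_zero]; exact pow_ne_zero 3 (pow_ne_zero 2 hα.ne')
  have h := hNUM.div hDEN hne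
  have h2 := h.congr (fun x => (NNu_eq hα x).symm)
  simpa [add_zero] using h2

lemma tendsto_HH_atTop (hα : 0 < α) (hβ : 0 < β) :
    Tendsto (fun x => HH α β c₁ c₂ x) atTop (𝓝 ((8/3)*β*(3*α^2 - β^2))) := by
  have h := tendsto_HH_aux (α := α) (β := β) (c₁ := c₁) (c₂ := c₂) hα (tendsto_VV_atTop hβ) (tendsto_UU_atTop hβ)
  rw [show (8/3:ℝ)*β*(3*α^2 - β^2) = (8*α^8*β - 8/3*α^6*β^3) * 1 / (α^2)^3 by
    field_simp]
  exact h

lemma tendsto_HH_atBot (hα : 0 < α) (hβ : 0 < β) :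
    Tendsto (fun x => HH α β c₁ c₂ x) atBot (𝓝 (-((8/3)*β*(3*α^2 - β^2)))) := by
  have h := tendsto_HH_aux (α := α) (β := β) (c₁ := c₁) (c₂ := c₂) hα (tendsto_VV_atBot hβ) (tendsto_UU_atBot hβ)
  rw [show -((8/3:ℝ)*β*(3*α^2 - β^2)) = (8*α^8*β - 8/3*α^6*β^3) * (-1) / (α^2)^3 by
    field_simp]
  exact h

/-! ### Pointwise bounds on BF and BX -/

lemma SN_sq_le_one (x : ℝ) : SN α β c₁ c₂ x ^ 2 ≤ 1 := by
  have h := abs_SN_le (α := α) (β := β) (c₁ := c₁) (c₂ := c₂) x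
  calc SN α β c₁ c₂ x ^ 2 = |SN α β c₁ c₂ x| ^ 2 := (sq_abs _).symm
  _ ≤ 1 ^ 2 := pow_le_pow_left₀ (abs_nonneg _) h 2
  _ = 1 := one_pow 2

lemma one_le_CH_sq (x : ℝ) : (1:ℝ) ≤ CH α β c₁ c₂ x ^ 2 := by
  nlinarith [one_le_CH (α := α) (β := β) (c₁ := c₁) (c₂ := c₂) x]

lemma DD_ge (x : ℝ) : α^2 * CH α β c₁ c₂ x ^ 2 ≤ DD α β c₁ c₂ x := by
  simp only [DD, DDv]; nlinarith [sq_nonneg (β * SN α β c₁ c₂ x)]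

lemma DD_le (x : ℝ) : DD α β c₁ c₂ x ≤ (α^2 + β^2) * CH α β c₁ c₂ x ^ 2 := by
  simp only [DD, DDv]
  nlinarith [SN_sq_le_one (α := α) (β := β) (c₁ := c₁) (c₂ := c₂) x,
    one_le_CH_sq (α := α) (β := β) (c₁ := c₁) (c₂ := c₂) x, sq_nonneg β]

lemma abs_EE_le (hα : 0 < α) (hβ : 0 < β) (x : ℝ) :
    |EE α β c₁ c₂ x| ≤ (α + β) * CH α β c₁ c₂ x := by
  have hch := CH_pos (α := α) (β := β) (c₁ := c₁) (c₂ := c₂) x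
  have h1 : |α * CN α β c₁ c₂ x * CH α β c₁ c₂ x| ≤ α * CH α β c₁ c₂ x := by
    rw [abs_mul, abs_mul, abs_of_pos hα, abs_of_pos hch]
    have h := abs_CN_le (α := α) (β := β) (c₁ := c₁) (c₂ := c₂) x
    calc α * |CN α β c₁ c₂ x| * CH α β c₁ c₂ x ≤ α * 1 * CH α β c₁ c₂ x :=
        mul_le_mul_of_nonneg_right (mul_le_mul_of_nonneg_left h hα.le) hch.le
    _ = α * CH α β c₁ c₂ x := by ring
  have h2 : |β * SN α β c₁ c₂ x * SH α β c₁ c₂ x| ≤ β * CH α β c₁ c₂ x := by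
    rw [abs_mul, abs_mul, abs_of_pos hβ]
    have h3 := abs_SN_le (α := α) (β := β) (c₁ := c₁) (c₂ := c₂) x
    have h4 := abs_SH_le (α := α) (β := β) (c₁ := c₁) (c₂ := c₂) x
    calc β * |SN α β c₁ c₂ x| * |SH α β c₁ c₂ x| ≤ (β * 1) * CH α β c₁ c₂ x :=
        mul_le_mul (mul_le_mul_of_nonneg_left h3 hβ.le) h4 (abs_nonneg _)
          (by nlinarith)
    _ = β * CH α β c₁ c₂ x := by ring
  simp only [EE, EEv]
  calc |α * CN α β c₁ c₂ x * CH α β c₁ c₂ x - β * SN α β c₁ c₂ x * SH α β c₁ c₂ x|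
      ≤ |α * CN α β c₁ c₂ x * CH α β c₁ c₂ x| + |β * SN α β c₁ c₂ x * SH α β c₁ c₂ x| :=
        abs_sub _ _
  _ ≤ α * CH α β c₁ c₂ x + β * CH α β c₁ c₂ x := add_le_add h1 h2
  _ = (α + β) * CH α β c₁ c₂ x := by ring

lemma abs_DP_le (hα : 0 < α) (hβ : 0 < β) (x : ℝ) :
    |DP α β c₁ c₂ x| ≤ 2*α*β*(α+β) * CH α β c₁ c₂ x ^ 2 := by
  have hch := CH_pos (α := α) (β := β) (c₁ := c₁) (c₂ := c₂) x
  have h1 : |α * SH α β c₁ c₂ x * CH α β c₁ c₂ x| ≤ α * CH α β c₁ c₂ x ^ 2 := by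
    rw [abs_mul, abs_mul, abs_of_pos hα, abs_of_pos hch]
    have h4 := abs_SH_le (α := α) (β := β) (c₁ := c₁) (c₂ := c₂) x
    calc α * |SH α β c₁ c₂ x| * CH α β c₁ c₂ x ≤ (α * CH α β c₁ c₂ x) * CH α β c₁ c₂ x :=
        mul_le_mul_of_nonneg_right (mul_le_mul_of_nonneg_left h4 hα.le) hch.le
    _ = α * CH α β c₁ c₂ x ^ 2 := by ring
  have h2 : |β * SN α β c₁ c₂ x * CN α β c₁ c₂ x| ≤ β * CH α β c₁ c₂ x ^ 2 := by
    rw [abs_mul, abs_mul, abs_of_pos hβ]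
    have h3 := abs_SN_le (α := α) (β := β) (c₁ := c₁) (c₂ := c₂) x
    have h5 := abs_CN_le (α := α) (β := β) (c₁ := c₁) (c₂ := c₂) x
    have h6 := one_le_CH_sq (α := α) (β := β) (c₁ := c₁) (c₂ := c₂) x
    calc β * |SN α β c₁ c₂ x| * |CN α β c₁ c₂ x| ≤ (β * 1) * 1 :=
        mul_le_mul (mul_le_mul_of_nonneg_left h3 hβ.le) h5 (abs_nonneg _) (by nlinarith)
    _ = β * 1 := by ring
    _ ≤ β * CH α β c₁ c₂ x ^ 2 := mul_le_mul_of_nonneg_left h6 hβ.le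
  have hadd : |α * SH α β c₁ c₂ x * CH α β c₁ c₂ x + β * SN α β c₁ c₂ x * CN α β c₁ c₂ x|
      ≤ (α+β) * CH α β c₁ c₂ x ^ 2 := by
    calc |α * SH α β c₁ c₂ x * CH α β c₁ c₂ x + β * SN α β c₁ c₂ x * CN α β c₁ c₂ x|
        ≤ |α * SH α β c₁ c₂ x * CH α β c₁ c₂ x| + |β * SN α β c₁ c₂ x * CN α β c₁ c₂ x| :=
          abs_add_le _ _
    _ ≤ α * CH α β c₁ c₂ x ^ 2 + β * CH α β c₁ c₂ x ^ 2 := add_le_add h1 h2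
    _ = (α+β) * CH α β c₁ c₂ x ^ 2 := by ring
  simp only [DP, DPv]
  rw [abs_mul, abs_of_pos (by positivity : (0:ℝ) < 2*α*β)]
  calc 2*α*β * |α * SH α β c₁ c₂ x * CH α β c₁ c₂ x + β * SN α β c₁ c₂ x * CN α β c₁ c₂ x|
      ≤ 2*α*β * ((α+β) * CH α β c₁ c₂ x ^ 2) :=
        mul_le_mul_of_nonneg_left hadd (by positivity)
  _ = 2*α*β*(α+β) * CH α β c₁ c₂ x ^ 2 := by ring

lemma abs_GG_le (hα : 0 < α) (hβ : 0 < β) (x : ℝ) :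
    |GG α β c₁ c₂ x| ≤ ((α^2+β^2)^2 + 2*α*β*(α+β)^2) * CH α β c₁ c₂ x ^ 3 := by
  have hch := CH_pos (α := α) (β := β) (c₁ := c₁) (c₂ := c₂) x
  have hDDpos := DD_pos (β := β) (c₁ := c₁) (c₂ := c₂) hα x
  have h1 : |(α^2+β^2) * SN α β c₁ c₂ x * CH α β c₁ c₂ x * DD α β c₁ c₂ x|
      ≤ (α^2+β^2)^2 * CH α β c₁ c₂ x ^ 3 := by
    rw [abs_mul, abs_mul, abs_mul, abs_of_pos (by positivity : (0:ℝ) < α^2+β^2),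
      abs_of_pos hch, abs_of_pos hDDpos]
    have h3 := abs_SN_le (α := α) (β := β) (c₁ := c₁) (c₂ := c₂) x
    have h4 := DD_le (α := α) (β := β) (c₁ := c₁) (c₂ := c₂) x
    calc (α^2+β^2) * |SN α β c₁ c₂ x| * CH α β c₁ c₂ x * DD α β c₁ c₂ x
        ≤ ((α^2+β^2) * 1 * CH α β c₁ c₂ x) * ((α^2+β^2) * CH α β c₁ c₂ x ^ 2) :=
          mul_le_mul
            (mul_le_mul_of_nonneg_right
              (mul_le_mul_of_nonneg_left h3 (by positivity)) hch.le)
            h4 hDDpos.le (by positivity)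
    _ = (α^2+β^2)^2 * CH α β c₁ c₂ x ^ 3 := by ring
  have h2 : |EE α β c₁ c₂ x * DP α β c₁ c₂ x| ≤ 2*α*β*(α+β)^2 * CH α β c₁ c₂ x ^ 3 := by
    rw [abs_mul]
    have hE := abs_EE_le (c₁ := c₁) (c₂ := c₂) hα hβ x
    have hPp := abs_DP_le (c₁ := c₁) (c₂ := c₂) hα hβ x
    calc |EE α β c₁ c₂ x| * |DP α β c₁ c₂ x|
        ≤ ((α+β) * CH α β c₁ c₂ x) * (2*α*β*(α+β) * CH α β c₁ c₂ x ^ 2) :=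
          mul_le_mul hE hPp (abs_nonneg _) (by positivity)
    _ = 2*α*β*(α+β)^2 * CH α β c₁ c₂ x ^ 3 := by ring
  have e : GG α β c₁ c₂ x
      = -((α^2+β^2) * SN α β c₁ c₂ x * CH α β c₁ c₂ x * DD α β c₁ c₂ x)
        - EE α β c₁ c₂ x * DP α β c₁ c₂ x := by
    simp only [GG, GGv, DD, EE, DP]; ring
  rw [e]
  calc |-((α^2+β^2) * SN α β c₁ c₂ x * CH α β c₁ c₂ x * DD α β c₁ c₂ x)
        - EE α β c₁ c₂ x * DP α β c₁ c₂ x|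
      ≤ |-((α^2+β^2) * SN α β c₁ c₂ x * CH α β c₁ c₂ x * DD α β c₁ c₂ x)|
        + |EE α β c₁ c₂ x * DP α β c₁ c₂ x| := abs_sub _ _
  _ = |(α^2+β^2) * SN α β c₁ c₂ x * CH α β c₁ c₂ x * DD α β c₁ c₂ x|
        + |EE α β c₁ c₂ x * DP α β c₁ c₂ x| := by rw [abs_neg]
  _ ≤ (α^2+β^2)^2 * CH α β c₁ c₂ x ^ 3 + 2*α*β*(α+β)^2 * CH α β c₁ c₂ x ^ 3 :=
        add_le_add h1 h2
  _ = ((α^2+β^2)^2 + 2*α*β*(α+β)^2) * CH α β c₁ c₂ x ^ 3 := by ring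

lemma abs_BF_le (hα : 0 < α) (hβ : 0 < β) (x : ℝ) :
    |BF α β c₁ c₂ x| ≤ (2*Real.sqrt 2*α*β*(α+β)/α^2) * UU α β c₁ c₂ x := by
  have hch := CH_pos (α := α) (β := β) (c₁ := c₁) (c₂ := c₂) x
  have hDDpos := DD_pos (β := β) (c₁ := c₁) (c₂ := c₂) hα x
  have hc : (0:ℝ) < 2*Real.sqrt 2*α*β := by positivity
  have h0 : |BF α β c₁ c₂ x| = 2*Real.sqrt 2*α*β*|EE α β c₁ c₂ x| / DD α β c₁ c₂ x := by
    simp only [BF]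
    rw [abs_div, abs_of_pos hDDpos, abs_mul, abs_of_pos hc]
  rw [h0]
  have hstep : 2*Real.sqrt 2*α*β*|EE α β c₁ c₂ x| / DD α β c₁ c₂ x
      ≤ 2*Real.sqrt 2*α*β*((α+β) * CH α β c₁ c₂ x) / (α^2 * CH α β c₁ c₂ x ^ 2) := by
    apply div_le_div₀ (by positivity)
      (mul_le_mul_of_nonneg_left (abs_EE_le (c₁ := c₁) (c₂ := c₂) hα hβ x) hc.le)
      (by positivity) (DD_ge (α := α) (β := β) (c₁ := c₁) (c₂ := c₂) x)
  apply hstep.trans_eq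
  simp only [UU]
  field_simp

lemma abs_BX_le (hα : 0 < α) (hβ : 0 < β) (x : ℝ) :
    |BX α β c₁ c₂ x|
      ≤ (2*Real.sqrt 2*α*β*((α^2+β^2)^2 + 2*α*β*(α+β)^2)/α^4) * UU α β c₁ c₂ x := by
  have hch := CH_pos (α := α) (β := β) (c₁ := c₁) (c₂ := c₂) x
  have hDDpos := DD_pos (β := β) (c₁ := c₁) (c₂ := c₂) hα x
  have hc : (0:ℝ) < 2*Real.sqrt 2*α*β := by positivity
  have h0 : |BX α β c₁ c₂ x| = 2*Real.sqrt 2*α*β*|GG α β c₁ c₂ x| / DD α β c₁ c₂ x ^ 2 := by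
    simp only [BX]
    rw [abs_div, abs_of_pos (pow_pos hDDpos 2), abs_mul, abs_of_pos hc]
  rw [h0]
  have hDD2 : α^4 * CH α β c₁ c₂ x ^ 4 ≤ DD α β c₁ c₂ x ^ 2 := by
    have h := DD_ge (α := α) (β := β) (c₁ := c₁) (c₂ := c₂) x
    have h2 := pow_le_pow_left₀ (by positivity : (0:ℝ) ≤ α^2 * CH α β c₁ c₂ x ^ 2) h 2
    calc α^4 * CH α β c₁ c₂ x ^ 4 = (α^2 * CH α β c₁ c₂ x ^ 2)^2 := by ring
    _ ≤ DD α β c₁ c₂ x ^ 2 := h2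
  have hstep : 2*Real.sqrt 2*α*β*|GG α β c₁ c₂ x| / DD α β c₁ c₂ x ^ 2
      ≤ 2*Real.sqrt 2*α*β*(((α^2+β^2)^2 + 2*α*β*(α+β)^2) * CH α β c₁ c₂ x ^ 3)
          / (α^4 * CH α β c₁ c₂ x ^ 4) := by
    apply div_le_div₀ (by positivity)
      (mul_le_mul_of_nonneg_left (abs_GG_le (c₁ := c₁) (c₂ := c₂) hα hβ x) hc.le)
      (by positivity) hDD2
  apply hstep.trans_eq
  simp only [UU]
  field_simp

lemma BX_sq_le (hα : 0 < α) (hβ : 0 < β) (x : ℝ) :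
    BX α β c₁ c₂ x ^ 2
      ≤ (2*Real.sqrt 2*α*β*((α^2+β^2)^2 + 2*α*β*(α+β)^2)/α^4)^2 * UU α β c₁ c₂ x ^ 2 := by
  have h := abs_BX_le (c₁ := c₁) (c₂ := c₂) hα hβ x
  calc BX α β c₁ c₂ x ^ 2 = |BX α β c₁ c₂ x| ^ 2 := (sq_abs _).symm
  _ ≤ ((2*Real.sqrt 2*α*β*((α^2+β^2)^2 + 2*α*β*(α+β)^2)/α^4) * UU α β c₁ c₂ x) ^ 2 :=
      pow_le_pow_left₀ (abs_nonneg _) h 2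
  _ = (2*Real.sqrt 2*α*β*((α^2+β^2)^2 + 2*α*β*(α+β)^2)/α^4)^2 * UU α β c₁ c₂ x ^ 2 := by
      ring

lemma BF_pow4_le (hα : 0 < α) (hβ : 0 < β) (x : ℝ) :
    BF α β c₁ c₂ x ^ 4
      ≤ (2*Real.sqrt 2*α*β*(α+β)/α^2)^4 * UU α β c₁ c₂ x ^ 2 := by
  have h := abs_BF_le (c₁ := c₁) (c₂ := c₂) hα hβ x
  have hu0 := UU_pos (α := α) (β := β) (c₁ := c₁) (c₂ := c₂) x
  have hu1 := UU_le_one (α := α) (β := β) (c₁ := c₁) (c₂ := c₂) x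
  have e : BF α β c₁ c₂ x ^ 4 = |BF α β c₁ c₂ x| ^ 4 := by
    rw [← abs_pow]
    exact (abs_of_nonneg (by positivity)).symm
  rw [e]
  calc |BF α β c₁ c₂ x| ^ 4
      ≤ ((2*Real.sqrt 2*α*β*(α+β)/α^2) * UU α β c₁ c₂ x) ^ 4 :=
        pow_le_pow_left₀ (abs_nonneg _) h 4
  _ = (2*Real.sqrt 2*α*β*(α+β)/α^2)^4 * UU α β c₁ c₂ x ^ 4 := by ring
  _ ≤ (2*Real.sqrt 2*α*β*(α+β)/α^2)^4 * UU α β c₁ c₂ x ^ 2 := by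
      apply mul_le_mul_of_nonneg_left _ (by positivity)
      have h2 : UU α β c₁ c₂ x ^ 2 ≤ 1 := by nlinarith
      calc UU α β c₁ c₂ x ^ 4 = UU α β c₁ c₂ x ^ 2 * UU α β c₁ c₂ x ^ 2 := by ring
      _ ≤ UU α β c₁ c₂ x ^ 2 * 1 := mul_le_mul_of_nonneg_left h2 (sq_nonneg _)
      _ = UU α β c₁ c₂ x ^ 2 := mul_one _

/-! ### Continuity -/

lemma cont_CH : Continuous (fun x => CH α β c₁ c₂ x) := by
  simp only [CH]; fun_prop

lemma cont_UU : Continuous (fun x => UU α β c₁ c₂ x) := by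
  simp only [UU]
  exact cont_CH.inv₀ (fun x => CH_ne x)

lemma cont_EE : Continuous (fun x => EE α β c₁ c₂ x) := by
  simp only [EE, EEv, SN, CN, SH, CH]; fun_prop

lemma cont_DD : Continuous (fun x => DD α β c₁ c₂ x) := by
  simp only [DD, DDv, SN, CH]; fun_prop

lemma cont_GG : Continuous (fun x => GG α β c₁ c₂ x) := by
  simp only [GG, GGv, DDv, EEv, DPv, SN, CN, SH, CH]; fun_prop

lemma cont_BF (hα : 0 < α) : Continuous (fun x => BF α β c₁ c₂ x) := by
  simp only [BF]
  exact (continuous_const.mul cont_EE).div cont_DD (fun x => DD_ne hα x)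

lemma cont_BX (hα : 0 < α) : Continuous (fun x => BX α β c₁ c₂ x) := by
  simp only [BX]
  exact (continuous_const.mul cont_GG).div (cont_DD.pow 2)
    (fun x => pow_ne_zero 2 (DD_ne hα x))

/-! ### Integrability -/

lemma int_UU2 (hβ : 0 < β) : Integrable (fun x => UU α β c₁ c₂ x ^ 2) := by
  have hd : ∀ x : ℝ, HasDerivAt (fun y => VV α β c₁ c₂ y / β) (UU α β c₁ c₂ x ^ 2) x := by
    intro x
    have h := (hasDerivAt_VV (α := α) (β := β) (c₁ := c₁) (c₂ := c₂) x).div_const β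
    rwa [mul_div_cancel_left₀ _ hβ.ne'] at h
  have hcont : Continuous (fun x => UU α β c₁ c₂ x ^ 2) := cont_UU.pow 2
  have hIoi : IntegrableOn (fun x => UU α β c₁ c₂ x ^ 2) (Ioi 0) :=
    integrableOn_Ioi_deriv_of_nonneg' (fun x _ => hd x) (fun x _ => sq_nonneg _)
      ((tendsto_VV_atTop hβ).div_const β)
  have hIic : IntegrableOn (fun x => UU α β c₁ c₂ x ^ 2) (Iic 0) := by
    refine integrableOn_Iic_of_intervalIntegral_norm_bounded (2/β) 0
      (fun i => hcont.integrableOn_Ioc) tendsto_id ?_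
    refine Eventually.of_forall fun y => ?_
    rw [intervalIntegral.integral_congr
      (g := fun x => UU α β c₁ c₂ x ^ 2)
      (fun x _ => by rw [Real.norm_eq_abs, abs_of_nonneg (sq_nonneg _)])]
    rw [intervalIntegral.integral_eq_sub_of_hasDerivAt (fun x _ => hd x)
      (hcont.intervalIntegrable _ _)]
    have h0 := abs_VV_le (α := α) (β := β) (c₁ := c₁) (c₂ := c₂) 0
    have h1 := abs_VV_le (α := α) (β := β) (c₁ := c₁) (c₂ := c₂) y
    rw [abs_le] at h0 h1
    rw [div_sub_div_same]
    rw [div_le_div_iff₀ hβ hβ]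
    have h2 : VV α β c₁ c₂ 0 - VV α β c₁ c₂ (id y) ≤ 2 := by
      simp only [id_eq]; linarith [h0.2, h1.1]
    nlinarith [mul_le_mul_of_nonneg_right h2 hβ.le]
  rw [← integrableOn_univ, ← Iic_union_Ioi (a := (0:ℝ))]
  exact hIic.union hIoi

lemma int_BX2 (hα : 0 < α) (hβ : 0 < β) :
    Integrable (fun x => BX α β c₁ c₂ x ^ 2) := by
  apply Integrable.mono'
    ((int_UU2 (α := α) (c₁ := c₁) (c₂ := c₂) hβ).const_mul
      ((2*Real.sqrt 2*α*β*((α^2+β^2)^2 + 2*α*β*(α+β)^2)/α^4)^2))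
    (((cont_BX hα).pow 2).aestronglyMeasurable)
  refine Eventually.of_forall fun x => ?_
  rw [Real.norm_eq_abs, abs_of_nonneg (sq_nonneg _)]
  exact BX_sq_le hα hβ x

lemma int_BF4 (hα : 0 < α) (hβ : 0 < β) :
    Integrable (fun x => BF α β c₁ c₂ x ^ 4) := by
  apply Integrable.mono'
    ((int_UU2 (α := α) (c₁ := c₁) (c₂ := c₂) hβ).const_mul
      ((2*Real.sqrt 2*α*β*(α+β)/α^2)^4))
    (((cont_BF hα).pow 4).aestronglyMeasurable)
  refine Eventually.of_forall fun x => ?_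
  rw [Real.norm_eq_abs, Pi.pow_apply, abs_of_nonneg (by positivity : (0:ℝ) ≤ BF α β c₁ c₂ x ^ 4)]
  exact BF_pow4_le hα hβ x

/-! ### The energy computation -/

lemma energy (hα : 0 < α) (hβ : 0 < β) :
    (1 / 2 : ℝ) * (∫ x : ℝ, BX α β c₁ c₂ x ^ 2) -
      (1 / 4 : ℝ) * (∫ x : ℝ, BF α β c₁ c₂ x ^ 4)
      = (4 / 3) * β * (3 * α ^ 2 - β ^ 2) := by
  have hint2 := int_BX2 (c₁ := c₁) (c₂ := c₂) hα hβ
  have hint4 := int_BF4 (c₁ := c₁) (c₂ := c₂) hα hβ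
  have hcomb : Integrable (fun x => 2 * BX α β c₁ c₂ x ^ 2 - BF α β c₁ c₂ x ^ 4) :=
    (hint2.const_mul 2).sub hint4
  have hIoi : ∫ x in Ioi (0:ℝ), (2 * BX α β c₁ c₂ x ^ 2 - BF α β c₁ c₂ x ^ 4)
      = (8/3)*β*(3*α^2 - β^2) - HH α β c₁ c₂ 0 :=
    integral_Ioi_of_hasDerivAt_of_tendsto' (fun x _ => hasDerivAt_HH hα x)
      hcomb.integrableOn (tendsto_HH_atTop hα hβ)
  have hIic : ∫ x in Iic (0:ℝ), (2 * BX α β c₁ c₂ x ^ 2 - BF α β c₁ c₂ x ^ 4)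
      = HH α β c₁ c₂ 0 - (-((8/3)*β*(3*α^2 - β^2))) :=
    integral_Iic_of_hasDerivAt_of_tendsto' (fun x _ => hasDerivAt_HH hα x)
      hcomb.integrableOn (tendsto_HH_atBot hα hβ)
  have htot := integral_Iic_add_Ioi (b := (0:ℝ)) hcomb.integrableOn hcomb.integrableOn
  rw [hIic, hIoi] at htot
  have hsplit : ∫ x : ℝ, (2 * BX α β c₁ c₂ x ^ 2 - BF α β c₁ c₂ x ^ 4)
      = 2 * (∫ x : ℝ, BX α β c₁ c₂ x ^ 2) - ∫ x : ℝ, BF α β c₁ c₂ x ^ 4 := by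
    rw [integral_sub (hint2.const_mul 2) hint4, MeasureTheory.integral_const_mul]
  rw [hsplit] at htot
  linarith

end

end BreatherEnergyProof

open BreatherEnergyProof in
theorem breather_energy (α β : ℝ) (hα : 0 < α) (hβ : 0 < β) (t : ℝ) :
    (1 / 2 : ℝ) * (∫ x : ℝ, (deriv (fun y => breather α β 0 0 t y) x) ^ 2) -
      (1 / 4 : ℝ) * (∫ x : ℝ, (breather α β 0 0 t x) ^ 4)
      = (4 / 3) * β * (3 * α ^ 2 - β ^ 2) := by
  set A₁ : ℝ := (α ^ 2 - 3 * β ^ 2) * t with hA₁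
  set A₂ : ℝ := (3 * α ^ 2 - β ^ 2) * t with hA₂
  have hcosh_ne : ∀ u : ℝ, Real.cosh u ≠ 0 := fun u => (Real.cosh_pos u).ne'
  have hBeq : ∀ x : ℝ, breather α β 0 0 t x = BF α β A₁ A₂ x := by
    intro x
    unfold breather
    have hlin1 : HasDerivAt (fun y : ℝ => α * (y + (α ^ 2 - 3 * β ^ 2) * t + 0)) α x := by
      simpa using (((hasDerivAt_id x).add_const ((α ^ 2 - 3 * β ^ 2) * t)).add_const
        (0:ℝ)).const_mul α
    have hlin2 : HasDerivAt (fun y : ℝ => β * (y + (3 * α ^ 2 - β ^ 2) * t + 0)) β x := by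
      simpa using (((hasDerivAt_id x).add_const ((3 * α ^ 2 - β ^ 2) * t)).add_const
        (0:ℝ)).const_mul β
    have hsin : HasDerivAt (fun y : ℝ => Real.sin (α * (y + (α ^ 2 - 3 * β ^ 2) * t + 0)))
        (Real.cos (α * (x + (α ^ 2 - 3 * β ^ 2) * t + 0)) * α) x :=
      (Real.hasDerivAt_sin _).comp x hlin1
    have hcosh : HasDerivAt (fun y : ℝ => Real.cosh (β * (y + (3 * α ^ 2 - β ^ 2) * t + 0)))
        (Real.sinh (β * (x + (3 * α ^ 2 - β ^ 2) * t + 0)) * β) x :=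
      (Real.hasDerivAt_cosh _).comp x hlin2
    have hfrac := (hsin.const_mul (β/α)).div hcosh (hcosh_ne _)
    have harc := (Real.hasDerivAt_arctan _).comp x hfrac
    have harc2 : HasDerivAt (fun y : ℝ =>
        Real.arctan (β / α * Real.sin (α * (y + (α ^ 2 - 3 * β ^ 2) * t + 0)) /
          Real.cosh (β * (y + (3 * α ^ 2 - β ^ 2) * t + 0)))) _ x := harc
    rw [harc2.deriv]
    simp only [add_zero, Pi.div_apply]
    simp only [BF, EE, EEv, DD, DDv, SN, CN, SH, CH]
    have hDD : α ^ 2 * Real.cosh (β * (x + A₂)) ^ 2 + β ^ 2 * Real.sin (α * (x + A₁)) ^ 2 ≠ 0 := by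
      have := DD_ne (α := α) (β := β) (c₁ := A₁) (c₂ := A₂) hα x
      simpa [DD, DDv, SN, CH] using this
    simp only [hA₁, hA₂] at hDD ⊢
    field_simp
  have hDeq : ∀ x : ℝ, deriv (fun y => breather α β 0 0 t y) x = BX α β A₁ A₂ x := by
    intro x
    have h1 : (fun y => breather α β 0 0 t y) = (fun y => BF α β A₁ A₂ y) := funext hBeq
    rw [h1]
    exact (hasDerivAt_BF hα x).deriv
  rw [show (∫ x : ℝ, (deriv (fun y => breather α β 0 0 t y) x) ^ 2)
      = ∫ x : ℝ, BX α β A₁ A₂ x ^ 2 from by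
    congr 1; funext x; rw [hDeq x]]
  rw [show (∫ x : ℝ, (breather α β 0 0 t x) ^ 4)
      = ∫ x : ℝ, BF α β A₁ A₂ x ^ 4 from by
    congr 1; funext x; rw [hBeq x]]
  exact BreatherEnergyProof.energy hα hβ
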